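/- Let n ≥ 4 be a natural number, Λ, Λ₀ ∈ ℝ, and let σ, β : ℝ → ℝ be functions with σ three times differentiable, β twice differentiable, and σ(t) > 0 for all t. Assume that for all t ∈ ℝ: (a) 2 σ(t) σ''(t) = σ'(t)² + 1/4, and (b) 2 β'(t) σ'(t) + 2 β(t) · ( (n−4) σ'(t)²/(2σ(t)) − 1/(4σ(t)) + σ''(t) ) − σ(t) Λ + Λ₀ = 0. Then at every point t with σ'(t) ≠ 0 one has 2 β''(t) + (n−2) β'(t) σ'(t)/σ(t) + (n−2) β(t)/(4 σ(t)²) = Λ. -/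

import Mathlib

/-- Reduction in the proof of Theorem 4.2: equations (4.24-bis) and (4.20-ter)
imply the second-order equation (4.23-bis) at every point where `σ' ≠ 0`. -/
theorem stmt5 (n : ℕ) (hn : 4 ≤ n) (Λ Λ₀ : ℝ) (σ β : ℝ → ℝ)
    (hσ1 : Differentiable ℝ σ) (hσ2 : Differentiable ℝ (deriv σ))
    (hσ3 : Differentiable ℝ (deriv (deriv σ)))
    (hβ1 : Differentiable ℝ β) (hβ2 : Differentiable ℝ (deriv β))
    (hσpos : ∀ t : ℝ, 0 < σ t)
    (ha : ∀ t : ℝ, 2 * σ t * deriv (deriv σ) t = (deriv σ t) ^ 2 + 1 / 4)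
    (hb : ∀ t : ℝ,
      2 * deriv β t * deriv σ t
          + 2 * β t * (((n : ℝ) - 4) * (deriv σ t) ^ 2 / (2 * σ t)
              - 1 / (4 * σ t) + deriv (deriv σ) t)
          - σ t * Λ + Λ₀ = 0) :
    ∀ t : ℝ, deriv σ t ≠ 0 →
      2 * deriv (deriv β) t + ((n : ℝ) - 2) * deriv β t * deriv σ t / σ t
          + ((n : ℝ) - 2) * β t / (4 * (σ t) ^ 2) = Λ := by
  -- the polynomial form of equation (4.20-ter), after clearing denominators via (4.24-bis)
  set P : ℝ → ℝ := fun x => 2 * deriv β x * deriv σ x * σ x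
      + β x * (((n : ℝ) - 3) * (deriv σ x) ^ 2 - 1 / 4) - (σ x) ^ 2 * Λ + Λ₀ * σ x with hPdef
  have hP : ∀ x, P x = 0 := by
    intro x
    have hs : σ x ≠ 0 := (hσpos x).ne'
    have hbx := hb x
    have hax := ha x
    field_simp at hbx
    have h8 : 8 * σ x ^ 2 * P x = 0 := by
      simp only [hPdef]
      linear_combination 2 * σ x ^ 2 * hbx - 8 * σ x ^ 2 * β x * hax
    have h8' : (8 : ℝ) * σ x ^ 2 ≠ 0 := by positivity
    exact (mul_eq_zero.mp h8).resolve_left h8'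
  intro t ht
  have hs : σ t ≠ 0 := (hσpos t).ne'
  have Hb : HasDerivAt β (deriv β t) t := (hβ1 t).hasDerivAt
  have Hb1 : HasDerivAt (deriv β) (deriv (deriv β) t) t := (hβ2 t).hasDerivAt
  have Hs : HasDerivAt σ (deriv σ t) t := (hσ1 t).hasDerivAt
  have Hs1 : HasDerivAt (deriv σ) (deriv (deriv σ) t) t := (hσ2 t).hasDerivAt
  set D : ℝ := 2 * deriv (deriv β) t * deriv σ t * σ t
      + 2 * deriv β t * deriv (deriv σ) t * σ t
      + 2 * deriv β t * (deriv σ t) ^ 2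
      + deriv β t * (((n : ℝ) - 3) * (deriv σ t) ^ 2 - 1 / 4)
      + β t * (((n : ℝ) - 3) * (2 * deriv σ t * deriv (deriv σ) t))
      - 2 * σ t * deriv σ t * Λ + Λ₀ * deriv σ t with hDdef
  have HP : HasDerivAt P D t := by
    have h1 := ((Hb1.const_mul (2 : ℝ)).mul Hs1).mul Hs
    have h2 := Hb.mul (((Hs1.pow 2).const_mul ((n : ℝ) - 3)).sub_const (1 / 4))
    have h3 := (Hs.pow 2).mul_const Λ
    have h4 := Hs.const_mul Λ₀
    have h5 := ((h1.add h2).sub h3).add h4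
    refine HasDerivAt.congr_deriv h5 ?_
    rw [hDdef]
    simp
    ring
  have hD0 : D = 0 := by
    have hPz : P = fun _ => (0 : ℝ) := funext hP
    have := HP.deriv
    rw [hPz] at this
    simp at this
    linarith [this]
  have hP0 := hP t
  have hax := ha t
  simp only [hPdef] at hP0
  rw [hDdef] at hD0
  field_simp
  have key : deriv σ t * (((2 * deriv (deriv β) t * σ t
        + ((n : ℝ) - 2) * deriv β t * deriv σ t) * (4 * σ t ^ 2)
        + ((n : ℝ) - 2) * β t * σ t) - Λ * (σ t * (4 * σ t ^ 2))) = 0 := by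
    linear_combination (4 * σ t ^ 2) * hD0 - (4 * σ t * deriv σ t) * hP0
      - (4 * σ t * (deriv β t * σ t + ((n : ℝ) - 3) * β t * deriv σ t)) * hax
  have h2 := (mul_eq_zero.mp key).resolve_left ht
  apply mul_left_cancel₀ hs
  linear_combination h2
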